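/- For p, d ∈ [0, 1/2] with d ≤ p, the quantity Δ = H(d) - (1 - p + d) H(d/(1 - p + d)) satisfies Δ = (1-p)log₂(1-p) - (1-d)log₂(1-d) - (1-p+d)log₂(1-p+d), and Δ ≤ min( 2(p-d)log₂ e, 2d log₂ e ). -/

import Mathlib

noncomputable def binH (p : ℝ) : ℝ :=
  -(p * Real.logb 2 p) - (1 - p) * Real.logb 2 (1 - p)

lemma xlogx_mono {a b : ℝ} (ha : 1/2 ≤ a) (hab : a ≤ b) :
    a * Real.log a ≤ b * Real.log b := by
  have ha0 : 0 < a := by linarith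
  have hb0 : 0 < b := by linarith
  have h1 : Real.log a - Real.log b ≤ a / b - 1 := by
    have := Real.log_le_sub_one_of_pos (div_pos ha0 hb0)
    rwa [Real.log_div ha0.ne' hb0.ne'] at this
  -- b*(log b - log a) ≥ b - a
  have h2 : b - a ≤ b * (Real.log b - Real.log a) := by
    have := mul_le_mul_of_nonneg_left h1 hb0.le
    have hb' : b * (a / b - 1) = a - b := by field_simp
    nlinarith [this]
  -- (b-a) * log a ≥ -(b-a) * log 2
  have h3 : -Real.log 2 ≤ Real.log a := by
    have : Real.log (1/2) ≤ Real.log a := Real.log_le_log (by norm_num) ha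
    simpa [Real.log_div, Real.log_one] using this
  have h4 : Real.log 2 ≤ 1 := by
    have := Real.log_le_sub_one_of_pos (by norm_num : (0:ℝ) < 2)
    linarith
  nlinarith [mul_le_mul_of_nonneg_left h3 (by linarith : (0:ℝ) ≤ b - a)]

lemma neg_xlogx_le {α : ℝ} (h0 : 0 ≤ α) (h1 : α ≤ 1/2) :
    -((1 - α) * Real.log (1 - α)) ≤ 2 * α := by
  have hy : (0:ℝ) < 1 - α := by linarith
  have := Real.log_le_sub_one_of_pos (show (0:ℝ) < (1-α)⁻¹ from inv_pos.mpr hy)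
  rw [Real.log_inv] at this
  -- -log(1-α) ≤ (1-α)⁻¹ - 1
  have h2 : (1-α) * (-Real.log (1-α)) ≤ (1-α) * ((1-α)⁻¹ - 1) :=
    mul_le_mul_of_nonneg_left this hy.le
  have h3 : (1-α) * ((1-α)⁻¹ - 1) = α := by field_simp; ring
  nlinarith

theorem stmt_18 (p d : ℝ) (hd0 : 0 ≤ d) (hdp : d ≤ p) (hp : p ≤ 1 / 2) :
    binH d - (1 - p + d) * binH (d / (1 - p + d)) =
      (1 - p) * Real.logb 2 (1 - p) - (1 - d) * Real.logb 2 (1 - d) -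
        (1 - p + d) * Real.logb 2 (1 - p + d) ∧
    binH d - (1 - p + d) * binH (d / (1 - p + d)) ≤
      min (2 * (p - d) * Real.logb 2 (Real.exp 1)) (2 * d * Real.logb 2 (Real.exp 1)) := by
  have hp0 : 0 ≤ p := le_trans hd0 hdp
  have hs0 : (0:ℝ) < 1 - p + d := by linarith
  have hsne : (1:ℝ) - p + d ≠ 0 := hs0.ne'
  have key : binH d - (1 - p + d) * binH (d / (1 - p + d)) =
      (1 - p) * Real.logb 2 (1 - p) - (1 - d) * Real.logb 2 (1 - d) -
        (1 - p + d) * Real.logb 2 (1 - p + d) := by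
    have h1 : (1:ℝ) - d / (1 - p + d) = (1 - p) / (1 - p + d) := by
      field_simp
      ring
    rcases eq_or_lt_of_le hd0 with h | hd
    · simp [binH, ← h]
    · have hpne : (1:ℝ) - p ≠ 0 := by intro h; linarith [h]
      unfold binH
      rw [h1, Real.logb_div hd.ne' hsne, Real.logb_div hpne hsne]
      field_simp
      ring
  refine ⟨key, ?_⟩
  rw [key]
  have hlog2 : (0:ℝ) < Real.log 2 := Real.log_pos (by norm_num)
  have he : Real.logb 2 (Real.exp 1) = 1 / Real.log 2 := by
    simp [Real.logb, Real.log_exp]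
  have hform : (1 - p) * Real.logb 2 (1 - p) - (1 - d) * Real.logb 2 (1 - d) -
      (1 - p + d) * Real.logb 2 (1 - p + d) =
      ((1 - p) * Real.log (1 - p) - (1 - d) * Real.log (1 - d) -
        (1 - p + d) * Real.log (1 - p + d)) / Real.log 2 := by
    simp [Real.logb]; ring
  rw [hform, he, le_min_iff]
  constructor
  · rw [show 2 * (p - d) * (1 / Real.log 2) = (2 * (p - d)) / Real.log 2 by ring,
      div_le_div_iff_of_pos_right hlog2]
    have hA : (1 - p) * Real.log (1 - p) ≤ (1 - d) * Real.log (1 - d) :=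
      xlogx_mono (by linarith) (by linarith)
    have hB : -((1 - (p - d)) * Real.log (1 - (p - d))) ≤ 2 * (p - d) :=
      neg_xlogx_le (by linarith) (by linarith)
    have : (1:ℝ) - (p - d) = 1 - p + d := by ring
    rw [this] at hB
    linarith
  · rw [show 2 * d * (1 / Real.log 2) = (2 * d) / Real.log 2 by ring,
      div_le_div_iff_of_pos_right hlog2]
    have hA : (1 - p) * Real.log (1 - p) ≤ (1 - p + d) * Real.log (1 - p + d) :=
      xlogx_mono (by linarith) (by linarith)
    have hB : -((1 - d) * Real.log (1 - d)) ≤ 2 * d :=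
      neg_xlogx_le hd0 (by linarith)
    linarith
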